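/- The map φ: M_g → Γ_+(M), m y^α ∂_ξ^j δ_g ↦ (−1)^{|α|+j} m ∂_t^α δ_f, satisfies the intertwining relations: (1) φ ∘ ∂_ξ^k = (−1)^k φ for all k ∈ Z; (2) φ ∘ y_i = −∂_{t_i} ∘ φ for all i; (3) φ ∘ ∂_{y_i} = t_i ∘ φ for all i; (4) φ ∘ θ_y = s ∘ φ, where θ_y = Σ y_i ∂_{y_i} on M_g and s = −Σ ∂_{t_i} t_i on Γ_+(M). -/

import Mathlib

/-- The map `φ : M_g → Γ_+(M)`, `m y^α ∂_ξ^j δ_g ↦ (−1)^{|α|+j} m ∂_t^α δ_f`,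
satisfies: (1) `φ ∘ ∂_ξ^k = (−1)^k φ` for all `k ∈ ℤ`; (2) `φ ∘ y_i = −∂_{t_i} ∘ φ`;
(3) `φ ∘ ∂_{y_i} = t_i ∘ φ`; (4) `φ ∘ θ_y = s ∘ φ` with `θ_y = Σ y_i ∂_{y_i}` on `M_g`
and `s = −Σ ∂_{t_i} t_i` on `Γ_+(M)`.  Here `M_g = ((Fin r →₀ ℕ) × ℤ) →₀ M`,
`Γ_+(M) = (Fin r →₀ ℕ) →₀ M`, `f i` is multiplication by `f_i`, and `∂_ξ` is the
invertible operator `Dξ` (a linear automorphism). -/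
theorem stmt7 (r : ℕ) (M : Type*) [AddCommGroup M] [Module ℂ M]
    (f : Fin r → Module.End ℂ M)
    (Y DY : Fin r → Module.End ℂ (((Fin r →₀ ℕ) × ℤ) →₀ M))
    (Dξ : (((Fin r →₀ ℕ) × ℤ) →₀ M) ≃ₗ[ℂ] (((Fin r →₀ ℕ) × ℤ) →₀ M))
    (T DT : Fin r → Module.End ℂ ((Fin r →₀ ℕ) →₀ M))
    (hY : ∀ (i : Fin r) (α : Fin r →₀ ℕ) (j : ℤ) (m : M),
      Y i (Finsupp.single (α, j) m) = Finsupp.single (α + Finsupp.single i 1, j) m)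
    (hDY : ∀ (i : Fin r) (α : Fin r →₀ ℕ) (j : ℤ) (m : M),
      DY i (Finsupp.single (α, j) m) =
        (α i : ℂ) • Finsupp.single (α - Finsupp.single i 1, j) m -
          Finsupp.single (α, j + 1) (f i m))
    (hDξ : ∀ (α : Fin r →₀ ℕ) (j : ℤ) (m : M),
      Dξ (Finsupp.single (α, j) m) = Finsupp.single (α, j + 1) m)
    (hT : ∀ (i : Fin r) (α : Fin r →₀ ℕ) (m : M),
      T i (Finsupp.single α m) =
        Finsupp.single α (f i m) - (α i : ℂ) • Finsupp.single (α - Finsupp.single i 1) m)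
    (hDT : ∀ (i : Fin r) (α : Fin r →₀ ℕ) (m : M),
      DT i (Finsupp.single α m) = Finsupp.single (α + Finsupp.single i 1) m)
    (φ : (((Fin r →₀ ℕ) × ℤ) →₀ M) →ₗ[ℂ] ((Fin r →₀ ℕ) →₀ M))
    (hφ : ∀ (α : Fin r →₀ ℕ) (j : ℤ) (m : M),
      φ (Finsupp.single (α, j) m) =
        ((-1 : ℂ) ^ ((∑ i, (α i : ℤ)) + j)) • Finsupp.single α m) :
    (∀ k : ℤ, φ ∘ₗ (Dξ ^ k).toLinearMap = ((-1 : ℂ) ^ k) • φ) ∧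
    (∀ i, φ ∘ₗ (Y i : (((Fin r →₀ ℕ) × ℤ) →₀ M) →ₗ[ℂ] (((Fin r →₀ ℕ) × ℤ) →₀ M)) =
      -((DT i : ((Fin r →₀ ℕ) →₀ M) →ₗ[ℂ] ((Fin r →₀ ℕ) →₀ M)) ∘ₗ φ)) ∧
    (∀ i, φ ∘ₗ (DY i : (((Fin r →₀ ℕ) × ℤ) →₀ M) →ₗ[ℂ] (((Fin r →₀ ℕ) × ℤ) →₀ M)) =
      (T i : ((Fin r →₀ ℕ) →₀ M) →ₗ[ℂ] ((Fin r →₀ ℕ) →₀ M)) ∘ₗ φ) ∧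
    (φ ∘ₗ ((∑ i, Y i * DY i : Module.End ℂ (((Fin r →₀ ℕ) × ℤ) →₀ M)) :
        (((Fin r →₀ ℕ) × ℤ) →₀ M) →ₗ[ℂ] (((Fin r →₀ ℕ) × ℤ) →₀ M)) =
      ((-(∑ i, DT i * T i) : Module.End ℂ ((Fin r →₀ ℕ) →₀ M)) :
        ((Fin r →₀ ℕ) →₀ M) →ₗ[ℂ] ((Fin r →₀ ℕ) →₀ M)) ∘ₗ φ) := by
  classical
  have hneg : ∀ n : ℤ, ((-1 : ℂ) ^ (n + 1)) = -((-1 : ℂ) ^ n) := by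
    intro n
    rw [zpow_add_one₀ (by norm_num : (-1 : ℂ) ≠ 0)]
    ring
  -- sum lemma for adding a single
  have hsum_add : ∀ (i : Fin r) (α : Fin r →₀ ℕ),
      (∑ i', ((α + Finsupp.single i 1 : Fin r →₀ ℕ) i' : ℤ)) = (∑ i', ((α i' : ℕ) : ℤ)) + 1 := by
    intro i α
    simp only [Finsupp.add_apply, Finsupp.single_apply, Nat.cast_add]
    rw [Finset.sum_add_distrib]
    congr 1
    simp [Finset.sum_ite_eq]
  -- sum lemma for subtracting a single (when α i ≠ 0)
  have hsum_sub : ∀ (i : Fin r) (α : Fin r →₀ ℕ), α i ≠ 0 →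
      (∑ i', ((α - Finsupp.single i 1 : Fin r →₀ ℕ) i' : ℤ)) = (∑ i', ((α i' : ℕ) : ℤ)) - 1 := by
    intro i α hα
    have key : ∀ i', ((α - Finsupp.single i 1 : Fin r →₀ ℕ) i' : ℤ)
        = ((α i' : ℕ) : ℤ) - (if i = i' then 1 else 0) := by
      intro i'
      rw [Finsupp.tsub_apply]
      by_cases h : i = i'
      · subst h
        rw [Finsupp.single_eq_same, if_pos rfl]
        have h1 : 1 ≤ α i := Nat.one_le_iff_ne_zero.mpr hα
        omega
      · rw [Finsupp.single_eq_of_ne' h, if_neg h]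
        simp
    rw [Finset.sum_congr rfl fun i' _ => key i', Finset.sum_sub_distrib]
    congr 1
    simp [Finset.sum_ite_eq]
  -- when α i = 0, subtraction does nothing
  have hsub_zero : ∀ (i : Fin r) (α : Fin r →₀ ℕ), α i = 0 →
      α - Finsupp.single i 1 = α := by
    intro i α hα
    ext i'
    rw [Finsupp.tsub_apply, Finsupp.single_apply]
    by_cases h : i = i'
    · subst h; simp [hα]
    · simp [h]
  -- φ ∘ Dξ = -φ (pointwise)
  have hDξφ : ∀ x, φ (Dξ x) = -φ x := by
    have h : φ ∘ₗ Dξ.toLinearMap = -φ := by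
      apply Finsupp.lhom_ext
      rintro ⟨α, j⟩ m
      simp only [LinearMap.comp_apply, LinearEquiv.coe_coe, LinearMap.neg_apply, hDξ, hφ]
      rw [show (∑ i, ((α i : ℕ) : ℤ)) + (j + 1) = ((∑ i, ((α i : ℕ) : ℤ)) + j) + 1 by ring,
        hneg, neg_smul]
    intro x
    simpa using LinearMap.ext_iff.mp h x
  have hDξφ' : ∀ x, φ (Dξ.symm x) = -φ x := by
    intro x
    have h := hDξφ (Dξ.symm x)
    rw [Dξ.apply_symm_apply] at h
    rw [h, neg_neg]
  -- Statement (1)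
  have st1 : ∀ k : ℤ, φ ∘ₗ (Dξ ^ k).toLinearMap = ((-1 : ℂ) ^ k) • φ := by
    intro k
    induction k using Int.induction_on with
    | zero => apply LinearMap.ext; intro x; simp
    | succ n ih =>
        apply LinearMap.ext
        intro x
        have hz : (Dξ ^ ((n : ℤ) + 1)) x = (Dξ ^ (n : ℤ)) (Dξ x) := by
          rw [zpow_add_one]; rfl
        have ihx := LinearMap.ext_iff.mp ih (Dξ x)
        simp only [LinearMap.comp_apply, LinearEquiv.coe_coe, LinearMap.smul_apply] at ihx ⊢
        rw [hz, ihx, hDξφ, hneg]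
        simp [smul_neg, inv_neg_one, mul_neg_one, neg_smul]
    | pred n ih =>
        apply LinearMap.ext
        intro x
        have hz : (Dξ ^ (-(n : ℤ) - 1)) x = (Dξ ^ (-(n : ℤ))) (Dξ.symm x) := by
          rw [zpow_sub_one]; rfl
        have ihx := LinearMap.ext_iff.mp ih (Dξ.symm x)
        simp only [LinearMap.comp_apply, LinearEquiv.coe_coe, LinearMap.smul_apply] at ihx ⊢
        rw [hz, ihx, hDξφ']
        rw [show -(n : ℤ) - 1 = (-(n : ℤ)) + (-1) by ring,
          zpow_add₀ (by norm_num : (-1 : ℂ) ≠ 0)]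
        simp [smul_neg, inv_neg_one, mul_neg_one, neg_smul]
  -- Statement (2)
  have st2 : ∀ i, φ ∘ₗ (Y i : (((Fin r →₀ ℕ) × ℤ) →₀ M) →ₗ[ℂ] (((Fin r →₀ ℕ) × ℤ) →₀ M)) =
      -((DT i : ((Fin r →₀ ℕ) →₀ M) →ₗ[ℂ] ((Fin r →₀ ℕ) →₀ M)) ∘ₗ φ) := by
    intro i
    apply Finsupp.lhom_ext
    rintro ⟨α, j⟩ m
    simp only [LinearMap.comp_apply, LinearMap.neg_apply, hY, hφ, map_smul, hDT]
    rw [hsum_add i α,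
      show (∑ i', ((α i' : ℕ) : ℤ)) + 1 + j = ((∑ i', ((α i' : ℕ) : ℤ)) + j) + 1 by ring,
      hneg, neg_smul]
  -- Statement (3)
  have st3 : ∀ i, φ ∘ₗ (DY i : (((Fin r →₀ ℕ) × ℤ) →₀ M) →ₗ[ℂ] (((Fin r →₀ ℕ) × ℤ) →₀ M)) =
      (T i : ((Fin r →₀ ℕ) →₀ M) →ₗ[ℂ] ((Fin r →₀ ℕ) →₀ M)) ∘ₗ φ := by
    intro i
    apply Finsupp.lhom_ext
    rintro ⟨α, j⟩ m
    simp only [LinearMap.comp_apply, hDY, map_sub, map_smul, hφ, hT, smul_sub]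
    rw [show (∑ i', ((α i' : ℕ) : ℤ)) + (j + 1) = ((∑ i', ((α i' : ℕ) : ℤ)) + j) + 1 by ring,
      hneg, neg_smul, sub_neg_eq_add]
    by_cases hα : α i = 0
    · rw [hsub_zero i α hα, hα]
      simp
    · rw [hsum_sub i α hα,
        show (∑ i', ((α i' : ℕ) : ℤ)) - 1 + j = ((∑ i', ((α i' : ℕ) : ℤ)) + j) + (-1) by ring,
        zpow_add₀ (by norm_num : (-1 : ℂ) ≠ 0)]
      simp only [zpow_neg_one, inv_neg_one, smul_smul]
      module
  -- Statement (4)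
  refine ⟨st1, st2, st3, ?_⟩
  have st2' : ∀ i x, φ (Y i x) = -(DT i (φ x)) := fun i x => by
    simpa using LinearMap.ext_iff.mp (st2 i) x
  have st3' : ∀ i x, φ (DY i x) = T i (φ x) := fun i x => by
    simpa using LinearMap.ext_iff.mp (st3 i) x
  apply LinearMap.ext
  intro x
  simp only [LinearMap.comp_apply, LinearMap.coe_sum, Finset.sum_apply,
    LinearMap.neg_apply, map_sum, Module.End.mul_apply]
  rw [← Finset.sum_neg_distrib]
  exact Finset.sum_congr rfl fun i _ => by rw [st2', st3']
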